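/- Let W be a subset of the vertices of a simple graph G, define the weight function w on E(G) by w(e) = 2 if both endpoints of e lie in W and w(e) = 1 otherwise, and let x^a be the product of the variables in W. Then sqrt(I(G_w) : x^a) = I(G[W]) + (variables y not in W adjacent to some vertex of W) + I(G[W']), where W' is the set of vertices outside W not adjacent to any vertex of W. -/

import Mathlib

open MvPolynomial

section Aux

variable {K : Type*} [Field K] {n : ℕ}

private lemma hX_mon (i : Fin n) :
    (X i : MvPolynomial (Fin n) K) = monomial (Finsupp.single i 1) 1 := rfl

private lemma XX_pow (i j : Fin n) (e : ℕ) :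
    (X i * X j : MvPolynomial (Fin n) K) ^ e
      = monomial (e • (Finsupp.single i 1 + Finsupp.single j 1)) 1 := by
  rw [hX_mon, hX_mon, monomial_mul, monomial_pow, one_mul, one_pow]

private lemma XX_mon (i j : Fin n) :
    (X i * X j : MvPolynomial (Fin n) K)
      = monomial (Finsupp.single i 1 + Finsupp.single j 1) 1 := by
  have := XX_pow (K := K) i j 1
  rwa [pow_one, one_smul] at this

private lemma pair_entry_le {i j : Fin n} (hij : i ≠ j) (k : Fin n) :
    (Finsupp.single i 1 + Finsupp.single j 1 : Fin n →₀ ℕ) k ≤ 1 := by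
  rw [Finsupp.add_apply]
  by_cases hik : i = k
  · subst hik
    rw [Finsupp.single_eq_same, Finsupp.single_eq_of_ne' (fun h : j = i => hij h.symm)]
    omega
  · rw [Finsupp.single_eq_of_ne' hik]
    by_cases hjk : j = k
    · subst hjk
      rw [Finsupp.single_eq_same]
    · rw [Finsupp.single_eq_of_ne' hjk]
      omega

private lemma pair_le {i j : Fin n} (hij : i ≠ j) (d : Fin n →₀ ℕ) :
    (Finsupp.single i 1 + Finsupp.single j 1 : Fin n →₀ ℕ) ≤ d ↔ 1 ≤ d i ∧ 1 ≤ d j := by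
  rw [Finsupp.le_def]
  constructor
  · intro h
    constructor
    · have hi := h i
      rwa [Finsupp.add_apply, Finsupp.single_eq_same,
        Finsupp.single_eq_of_ne' (fun h' : j = i => hij h'.symm), add_zero] at hi
    · have hj := h j
      rwa [Finsupp.add_apply, Finsupp.single_eq_of_ne' hij, Finsupp.single_eq_same,
        zero_add] at hj
  · rintro ⟨h1, h2⟩ k
    rw [Finsupp.add_apply]
    by_cases hik : i = k
    · subst hik
      rw [Finsupp.single_eq_same, Finsupp.single_eq_of_ne' (fun h' : j = i => hij h'.symm),
        add_zero]
      exact h1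
    · rw [Finsupp.single_eq_of_ne' hik]
      by_cases hjk : j = k
      · subst hjk
        rw [Finsupp.single_eq_same, zero_add]
        exact h2
      · rw [Finsupp.single_eq_of_ne' hjk]
        omega

private lemma le_helperA {i j : Fin n} (hij : i ≠ j) (a : Fin n →₀ ℕ)
    (hai : 1 ≤ a i) (haj : 1 ≤ a j) :
    (2 : ℕ) • (Finsupp.single i 1 + Finsupp.single j 1)
      ≤ (Finsupp.single i 1 + Finsupp.single j 1) + a := by
  rw [Finsupp.le_def]
  intro k
  rw [Finsupp.add_apply, Finsupp.smul_apply, smul_eq_mul]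
  by_cases hik : i = k
  · subst hik
    rw [Finsupp.add_apply, Finsupp.single_eq_same,
      Finsupp.single_eq_of_ne' (fun h : j = i => hij h.symm)]
    omega
  · by_cases hjk : j = k
    · subst hjk
      rw [Finsupp.add_apply, Finsupp.single_eq_of_ne' hij, Finsupp.single_eq_same]
      omega
    · rw [Finsupp.add_apply, Finsupp.single_eq_of_ne' hik, Finsupp.single_eq_of_ne' hjk]
      omega

private lemma le_helperB {i j : Fin n} (hij : i ≠ j) (a : Fin n →₀ ℕ) (hai : 1 ≤ a i) :
    (Finsupp.single i 1 + Finsupp.single j 1 : Fin n →₀ ℕ) ≤ Finsupp.single j 1 + a := by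
  rw [Finsupp.le_def]
  intro k
  rw [Finsupp.add_apply, Finsupp.add_apply]
  by_cases hik : i = k
  · subst hik
    rw [Finsupp.single_eq_same, Finsupp.single_eq_of_ne' (fun h : j = i => hij h.symm)]
    omega
  · rw [Finsupp.single_eq_of_ne' hik]
    by_cases hjk : j = k
    · subst hjk
      rw [Finsupp.single_eq_same]
      omega
    · rw [Finsupp.single_eq_of_ne' hjk]
      omega

private lemma prod_X_eq (W : Finset (Fin n)) :
    ∏ i ∈ W, (X i : MvPolynomial (Fin n) K)
      = monomial (∑ i ∈ W, Finsupp.single i 1) 1 := by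
  induction W using Finset.cons_induction with
  | empty => simp
  | cons i s hi ih =>
      rw [Finset.prod_cons, Finset.sum_cons, ih, hX_mon, monomial_mul, one_mul]

private lemma prime_span_X (S : Set (Fin n)) :
    (Ideal.span (X '' S : Set (MvPolynomial (Fin n) K))).IsPrime := by
  classical
  set P := Ideal.span (X '' S : Set (MvPolynomial (Fin n) K)) with hP
  let φ : MvPolynomial (Fin n) K →+* MvPolynomial (Fin n) K :=
    (aeval (fun i => if i ∈ S then 0 else X i) :
      MvPolynomial (Fin n) K →ₐ[K] MvPolynomial (Fin n) K).toRingHom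
  have hφX : ∀ i, φ (X i) = if i ∈ S then 0 else X i := fun i => aeval_X _ i
  have hXmem : ∀ i, (X i - φ (X i) : MvPolynomial (Fin n) K) ∈ P := by
    intro i
    rw [hφX]
    by_cases hi : i ∈ S
    · rw [if_pos hi, sub_zero]
      exact Ideal.subset_span ⟨i, hi, rfl⟩
    · rw [if_neg hi, sub_self]
      exact P.zero_mem
  have key : ∀ f : MvPolynomial (Fin n) K, f - φ f ∈ P := by
    intro f
    induction f using MvPolynomial.induction_on with
    | C a =>
        have : φ (C a) = C a := by
          simp [φ, algHom_C]
        rw [this, sub_self]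
        exact P.zero_mem
    | add p q hp hq =>
        have h : p + q - φ (p + q) = (p - φ p) + (q - φ q) := by
          rw [map_add]; ring
        rw [h]
        exact P.add_mem hp hq
    | mul_X p i hp =>
        have h : p * X i - φ (p * X i) = (p - φ p) * X i + φ p * (X i - φ (X i)) := by
          rw [map_mul]; ring
        rw [h]
        exact P.add_mem (Ideal.mul_mem_right _ _ hp) (Ideal.mul_mem_left _ _ (hXmem i))
  have hker : P = RingHom.ker φ := by
    apply le_antisymm
    · rw [hP, Ideal.span_le]
      rintro _ ⟨i, hi, rfl⟩
      simp only [SetLike.mem_coe, RingHom.mem_ker, hφX, if_pos hi]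
    · intro f hf
      rw [RingHom.mem_ker] at hf
      have := key f
      rwa [hf, sub_zero] at this
  rw [hker]
  exact RingHom.ker_isPrime φ

private lemma radical_sqfree (D : Set (Fin n →₀ ℕ)) (hD : ∀ v ∈ D, ∀ i, v i ≤ 1) :
    (Ideal.span ((fun v => monomial v (1 : K)) '' D)).radical
      = Ideal.span ((fun v => monomial v (1 : K)) '' D) := by
  classical
  refine le_antisymm ?_ Ideal.le_radical
  intro f hf
  rw [mem_ideal_span_monomial_image]
  intro d hd
  by_contra hcon
  push_neg at hcon
  set S : Set (Fin n) := {i | d i = 0} with hS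
  have hle : Ideal.span ((fun v => monomial v (1 : K)) '' D)
      ≤ Ideal.span (X '' S : Set (MvPolynomial (Fin n) K)) := by
    rw [Ideal.span_le]
    rintro _ ⟨v, hv, rfl⟩
    rw [SetLike.mem_coe, mem_ideal_span_X_image]
    intro m hm
    rw [support_monomial, if_neg one_ne_zero, Finset.mem_singleton] at hm
    subst hm
    have hnle : ¬ m ≤ d := hcon m hv
    rw [Finsupp.le_def] at hnle
    push_neg at hnle
    obtain ⟨i, hi⟩ := hnle
    have hv1 := hD m hv i
    exact ⟨i, show d i = 0 by omega, by omega⟩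
  have hfP := ((prime_span_X (K := K) S).radical_le_iff).mpr hle hf
  rw [mem_ideal_span_X_image] at hfP
  obtain ⟨i, hiS, hdi⟩ := hfP d hd
  exact hdi hiS

end Aux

/-- For a vertex subset `W` of `G`, give weight `2` to edges
inside `W` and `1` to all other edges, and let `x^a = ∏_{i ∈ W} x_i`.  Then
`√(I(G_w) : x^a) = I(G[W]) + (variables outside W adjacent to W) + I(G[W'])`,
where `W'` is the set of vertices outside `W` not adjacent to any vertex of `W`. -/
theorem stmt15 (K : Type*) [Field K] (n : ℕ) (G : SimpleGraph (Fin n))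
    (W : Finset (Fin n)) :
    (Submodule.colon
        (Ideal.span {p : MvPolynomial (Fin n) K | ∃ i j, G.Adj i j ∧
          p = (X i * X j) ^ (if i ∈ W ∧ j ∈ W then 2 else 1)})
        (Ideal.span {∏ i ∈ W, (X i : MvPolynomial (Fin n) K)})).radical
      = Ideal.span
          ({p : MvPolynomial (Fin n) K | ∃ i j, i ∈ W ∧ j ∈ W ∧ G.Adj i j ∧
              p = X i * X j}
            ∪ {p | ∃ j, j ∉ W ∧ (∃ i ∈ W, G.Adj i j) ∧ p = X j}
            ∪ {p | ∃ i j, i ∉ W ∧ j ∉ W ∧ (∀ k ∈ W, ¬ G.Adj k i) ∧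
              (∀ k ∈ W, ¬ G.Adj k j) ∧ G.Adj i j ∧ p = X i * X j}) := by
  classical
  -- exponent vector of ∏_{i ∈ W} X i
  set a : Fin n →₀ ℕ := ∑ i ∈ W, Finsupp.single i 1 with ha_def
  have ha : ∀ k, a k = if k ∈ W then 1 else 0 := by
    intro k
    rw [ha_def, Finsupp.finset_sum_apply]
    simp [Finsupp.single_apply]
  have hprod : ∏ i ∈ W, (X i : MvPolynomial (Fin n) K) = monomial a 1 :=
    prod_X_eq W
  -- exponent-vector descriptions of the generating sets
  set DI : Set (Fin n →₀ ℕ) := {v | ∃ i j, G.Adj i j ∧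
      v = (if i ∈ W ∧ j ∈ W then 2 else 1) • (Finsupp.single i 1 + Finsupp.single j 1)}
    with hDI_def
  set DJ : Set (Fin n →₀ ℕ) :=
      ({v | ∃ i j, i ∈ W ∧ j ∈ W ∧ G.Adj i j ∧ v = Finsupp.single i 1 + Finsupp.single j 1}
        ∪ {v | ∃ j, j ∉ W ∧ (∃ i ∈ W, G.Adj i j) ∧ v = Finsupp.single j 1}
        ∪ {v | ∃ i j, i ∉ W ∧ j ∉ W ∧ (∀ k ∈ W, ¬ G.Adj k i) ∧
            (∀ k ∈ W, ¬ G.Adj k j) ∧ G.Adj i j ∧ v = Finsupp.single i 1 + Finsupp.single j 1})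
    with hDJ_def
  have hIset : {p : MvPolynomial (Fin n) K | ∃ i j, G.Adj i j ∧
      p = (X i * X j) ^ (if i ∈ W ∧ j ∈ W then 2 else 1)}
      = (fun v => monomial v (1 : K)) '' DI := by
    ext p
    constructor
    · rintro ⟨i, j, hadj, rfl⟩
      exact ⟨_, ⟨i, j, hadj, rfl⟩, (XX_pow i j _).symm⟩
    · rintro ⟨v, ⟨i, j, hadj, rfl⟩, rfl⟩
      exact ⟨i, j, hadj, (XX_pow i j _).symm⟩
  have hJset : ({p : MvPolynomial (Fin n) K | ∃ i j, i ∈ W ∧ j ∈ W ∧ G.Adj i j ∧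
              p = X i * X j}
            ∪ {p | ∃ j, j ∉ W ∧ (∃ i ∈ W, G.Adj i j) ∧ p = X j}
            ∪ {p | ∃ i j, i ∉ W ∧ j ∉ W ∧ (∀ k ∈ W, ¬ G.Adj k i) ∧
              (∀ k ∈ W, ¬ G.Adj k j) ∧ G.Adj i j ∧ p = X i * X j})
      = (fun v => monomial v (1 : K)) '' DJ := by
    ext p
    constructor
    · rintro ((⟨i, j, hiW, hjW, hadj, rfl⟩ | ⟨j, hjW, hadj, rfl⟩) |
        ⟨i, j, hiW, hjW, hki, hkj, hadj, rfl⟩)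
      · exact ⟨_, Or.inl (Or.inl ⟨i, j, hiW, hjW, hadj, rfl⟩), (XX_mon i j).symm⟩
      · exact ⟨_, Or.inl (Or.inr ⟨j, hjW, hadj, rfl⟩), (hX_mon j).symm⟩
      · exact ⟨_, Or.inr ⟨i, j, hiW, hjW, hki, hkj, hadj, rfl⟩, (XX_mon i j).symm⟩
    · rintro ⟨v, ((⟨i, j, hiW, hjW, hadj, rfl⟩ | ⟨j, hjW, hadj, rfl⟩) |
        ⟨i, j, hiW, hjW, hki, hkj, hadj, rfl⟩), rfl⟩
      · exact Or.inl (Or.inl ⟨i, j, hiW, hjW, hadj, (XX_mon i j).symm⟩)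
      · exact Or.inl (Or.inr ⟨j, hjW, hadj, (hX_mon j).symm⟩)
      · exact Or.inr ⟨i, j, hiW, hjW, hki, hkj, hadj, (XX_mon i j).symm⟩
  rw [hIset, hJset, hprod]
  -- Step 1: the colon ideal is exactly the span over DJ.
  have hcolon : Submodule.colon (Ideal.span ((fun v => monomial v (1 : K)) '' DI))
      (Ideal.span {(monomial a 1 : MvPolynomial (Fin n) K)})
      = Ideal.span ((fun v => monomial v (1 : K)) '' DJ) := by
    apply le_antisymm
    · intro f hf
      rw [Ideal.mem_colon_span_singleton] at hf
      rw [mem_ideal_span_monomial_image] at hf ⊢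
      intro d hd
      have hd' : d + a ∈ (f * monomial a (1 : K)).support := by
        rw [mem_support_iff, coeff_mul_monomial, mul_one]
        exact mem_support_iff.mp hd
      obtain ⟨v, ⟨i, j, hadj, rfl⟩, hle⟩ := hf _ hd'
      have hij : i ≠ j := hadj.ne
      rw [Finsupp.le_def] at hle
      by_cases hw : i ∈ W ∧ j ∈ W
      · have hi := hle i
        have hj := hle j
        rw [if_pos hw, Finsupp.smul_apply, Finsupp.add_apply, Finsupp.single_eq_same,
          Finsupp.single_eq_of_ne' (fun h : j = i => hij h.symm), smul_eq_mul,
          Finsupp.add_apply, ha i, if_pos hw.1] at hi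
        rw [if_pos hw, Finsupp.smul_apply, Finsupp.add_apply,
          Finsupp.single_eq_of_ne' hij, Finsupp.single_eq_same, smul_eq_mul,
          Finsupp.add_apply, ha j, if_pos hw.2] at hj
        exact ⟨Finsupp.single i 1 + Finsupp.single j 1,
          Or.inl (Or.inl ⟨i, j, hw.1, hw.2, hadj, rfl⟩),
          (pair_le hij d).mpr ⟨by omega, by omega⟩⟩
      · have hi := hle i
        have hj := hle j
        rw [if_neg hw, one_smul, Finsupp.add_apply, Finsupp.single_eq_same,
          Finsupp.single_eq_of_ne' (fun h : j = i => hij h.symm),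
          Finsupp.add_apply, ha i] at hi
        rw [if_neg hw, one_smul, Finsupp.add_apply,
          Finsupp.single_eq_of_ne' hij, Finsupp.single_eq_same,
          Finsupp.add_apply, ha j] at hj
        by_cases hiW : i ∈ W
        · have hjW : j ∉ W := fun h => hw ⟨hiW, h⟩
          rw [if_neg hjW] at hj
          exact ⟨Finsupp.single j 1, Or.inl (Or.inr ⟨j, hjW, ⟨i, hiW, hadj⟩, rfl⟩),
            Finsupp.single_le_iff.mpr (by omega)⟩
        · rw [if_neg hiW] at hi
          by_cases hjW : j ∈ W
          · exact ⟨Finsupp.single i 1, Or.inl (Or.inr ⟨i, hiW, ⟨j, hjW, hadj.symm⟩, rfl⟩),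
              Finsupp.single_le_iff.mpr (by omega)⟩
          · rw [if_neg hjW] at hj
            by_cases hadji : ∃ k ∈ W, G.Adj k i
            · exact ⟨Finsupp.single i 1, Or.inl (Or.inr ⟨i, hiW, hadji, rfl⟩),
                Finsupp.single_le_iff.mpr (by omega)⟩
            · by_cases hadjj : ∃ k ∈ W, G.Adj k j
              · exact ⟨Finsupp.single j 1, Or.inl (Or.inr ⟨j, hjW, hadjj, rfl⟩),
                  Finsupp.single_le_iff.mpr (by omega)⟩
              · push_neg at hadji hadjj
                exact ⟨Finsupp.single i 1 + Finsupp.single j 1,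
                  Or.inr ⟨i, j, hiW, hjW, hadji, hadjj, hadj, rfl⟩,
                  (pair_le hij d).mpr ⟨by omega, by omega⟩⟩
    · rw [Ideal.span_le]
      rintro _ ⟨v, hv, rfl⟩
      rw [SetLike.mem_coe, Ideal.mem_colon_span_singleton, monomial_mul, mul_one,
        mem_ideal_span_monomial_image]
      intro m hm
      rw [support_monomial, if_neg one_ne_zero, Finset.mem_singleton] at hm
      subst hm
      rcases hv with ((⟨i, j, hiW, hjW, hadj, rfl⟩ | ⟨j, hjW, ⟨i, hiW, hadj⟩, rfl⟩) |
        ⟨i, j, hiW, hjW, hki, hkj, hadj, rfl⟩)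
      · refine ⟨(2 : ℕ) • (Finsupp.single i 1 + Finsupp.single j 1),
          ⟨i, j, hadj, by rw [if_pos ⟨hiW, hjW⟩]⟩,
          le_helperA hadj.ne a ?_ ?_⟩
        · rw [ha i, if_pos hiW]
        · rw [ha j, if_pos hjW]
      · exact ⟨Finsupp.single i 1 + Finsupp.single j 1,
          ⟨i, j, hadj, by rw [if_neg (fun h => hjW h.2), one_smul]⟩,
          le_helperB hadj.ne a (by rw [ha i, if_pos hiW])⟩
      · exact ⟨Finsupp.single i 1 + Finsupp.single j 1,
          ⟨i, j, hadj, by rw [if_neg (fun h => hiW h.1), one_smul]⟩,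
          le_add_right le_rfl⟩
  rw [hcolon]
  -- Step 2: the span over DJ is a radical ideal.
  apply radical_sqfree
  rintro v ((⟨i, j, _, _, hadj, rfl⟩ | ⟨j, _, _, rfl⟩) |
    ⟨i, j, _, _, _, _, hadj, rfl⟩) k
  · exact pair_entry_le hadj.ne k
  · rw [Finsupp.single_apply]
    split_ifs <;> omega
  · exact pair_entry_le hadj.ne k
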